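/- Strong duality for KL-regularized occupancy optimization: let S and A be finite nonempty types, let P be a transition kernel on S × A, let ρ₀ be a probability mass function on S, let 0 < γ < 1, let R : S × A → ℝ, and let d_O be a probability mass function on S × A with d_O(s,a) > 0 for all (s,a). Let F be the set of nonnegative functions d : S × A → ℝ satisfying the Bellman flow constraints Σ_a d(s,a) = (1−γ)·ρ₀(s) + γ·Σ_{(s',a')} P(s|s',a')·d(s',a') for every s (every such d is a probability mass function). Assume strict feasibility: there exists d ∈ F with d(s,a) > 0 for all (s,a). Then the primal optimal value equals the dual optimal value: sup over d ∈ F of [ Σ_{(s,a)} d(s,a)·R(s,a) − D_KL(d ‖ d_O) ] = inf over V : S → ℝ of [ (1−γ)·Σ_s ρ₀(s)·V(s) + log( Σ_{(s,a)} d_O(s,a)·exp( R(s,a) + γ·Σ_{s'} P(s'|s,a)·V(s') − V(s) ) ) ]. -/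

import Mathlib

set_option linter.unusedSectionVars false
set_option maxHeartbeats 1000000

lemma gibbs_ineq {X : Type*} [Fintype X] [Nonempty X] (d q f : X → ℝ)
    (hd : ∀ x, 0 ≤ d x) (hd1 : ∑ x, d x = 1) (hq : ∀ x, 0 < q x) :
    (∑ x, d x * f x) - ∑ x, d x * Real.log (d x / q x)
      ≤ Real.log (∑ x, q x * Real.exp (f x)) := by
  set Z := ∑ x, q x * Real.exp (f x) with hZ
  have hZpos : 0 < Z :=
    Finset.sum_pos (fun x _ => mul_pos (hq x) (Real.exp_pos _)) Finset.univ_nonempty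
  have key : ∀ x, d x * f x - d x * Real.log (d x / q x) - d x * Real.log Z
      ≤ q x * Real.exp (f x) / Z - d x := by
    intro x
    have hqe : 0 < q x * Real.exp (f x) := mul_pos (hq x) (Real.exp_pos _)
    have huZ : 0 < q x * Real.exp (f x) / Z := div_pos hqe hZpos
    rcases eq_or_lt_of_le (hd x) with h0 | hpos
    · rw [← h0]; simpa using huZ.le
    · have hu : (0:ℝ) < q x * Real.exp (f x) / Z / d x := div_pos huZ hpos
      have hlog := Real.log_le_sub_one_of_pos hu
      have hexpand : Real.log (q x * Real.exp (f x) / Z / d x)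
          = Real.log (q x) + f x - Real.log Z - Real.log (d x) := by
        rw [Real.log_div (ne_of_gt huZ) (ne_of_gt hpos),
            Real.log_div (ne_of_gt hqe) (ne_of_gt hZpos),
            Real.log_mul (ne_of_gt (hq x)) (ne_of_gt (Real.exp_pos _)),
            Real.log_exp]
      have h2 : Real.log (d x / q x) = Real.log (d x) - Real.log (q x) :=
        Real.log_div (ne_of_gt hpos) (ne_of_gt (hq x))
      have hmul : d x * Real.log (q x * Real.exp (f x) / Z / d x)
          ≤ d x * (q x * Real.exp (f x) / Z / d x - 1) :=
        mul_le_mul_of_nonneg_left hlog (hd x)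
      have hfield : d x * (q x * Real.exp (f x) / Z / d x - 1)
          = q x * Real.exp (f x) / Z - d x := by
        field_simp
      rw [hexpand] at hmul
      rw [hfield] at hmul
      nlinarith [hmul, h2]
  have hsum := Finset.sum_le_sum (fun x (_ : x ∈ Finset.univ) => key x)
  rw [Finset.sum_sub_distrib, Finset.sum_sub_distrib, Finset.sum_sub_distrib,
      ← Finset.sum_mul, hd1, ← Finset.sum_div, ← hZ] at hsum
  have : Z / Z = 1 := div_self (ne_of_gt hZpos)
  rw [this] at hsum
  linarith
set_option linter.unusedSectionVars false

section
variable {S A : Type*} [Fintype S] [Fintype A] [Nonempty S] [Nonempty A]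

lemma flow_sum_one (P : S × A → S → ℝ) (hP1 : ∀ p : S × A, ∑ s' : S, P p s' = 1)
    (ρ₀ : S → ℝ) (hρ1 : ∑ s : S, ρ₀ s = 1) (γ : ℝ) (hγ1 : γ < 1) (d : S × A → ℝ)
    (hflow : ∀ s : S, ∑ a : A, d (s, a)
        = (1 - γ) * ρ₀ s + γ * ∑ p : S × A, P p s * d p) :
    ∑ p : S × A, d p = 1 := by
  have h1 : ∑ p : S × A, d p
      = ∑ s : S, ((1 - γ) * ρ₀ s + γ * ∑ p : S × A, P p s * d p) := by
    rw [Fintype.sum_prod_type]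
    exact Finset.sum_congr rfl fun s _ => hflow s
  have h2 : ∑ s : S, ∑ p : S × A, P p s * d p = ∑ p : S × A, d p := by
    rw [Finset.sum_comm]
    refine Finset.sum_congr rfl fun p _ => ?_
    rw [← Finset.sum_mul, hP1 p, one_mul]
  rw [Finset.sum_add_distrib, ← Finset.mul_sum, ← Finset.mul_sum, hρ1, h2] at h1
  have hne : (1 - γ) ≠ 0 := by linarith
  nlinarith [h1]

lemma flow_identity (P : S × A → S → ℝ)
    (ρ₀ : S → ℝ) (γ : ℝ) (d : S × A → ℝ)
    (hflow : ∀ s : S, ∑ a : A, d (s, a)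
        = (1 - γ) * ρ₀ s + γ * ∑ p : S × A, P p s * d p) (V : S → ℝ) :
    ∑ p : S × A, d p * (V p.1 - γ * ∑ s' : S, P p s' * V s')
      = (1 - γ) * ∑ s : S, ρ₀ s * V s := by
  have h1 : ∑ p : S × A, d p * V p.1
      = ∑ s : S, ((1 - γ) * ρ₀ s + γ * ∑ p : S × A, P p s * d p) * V s := by
    rw [Fintype.sum_prod_type]
    refine Finset.sum_congr rfl fun s _ => ?_
    show ∑ y : A, d (s, y) * V s = _
    rw [← Finset.sum_mul, hflow s]
  have h2 : ∑ p : S × A, d p * (γ * ∑ s' : S, P p s' * V s')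
      = γ * ∑ s' : S, (∑ p : S × A, P p s' * d p) * V s' := by
    simp only [Finset.mul_sum, Finset.sum_mul]
    rw [Finset.sum_comm]
    exact Finset.sum_congr rfl fun x _ => Finset.sum_congr rfl fun y _ => by ring
  calc ∑ p : S × A, d p * (V p.1 - γ * ∑ s' : S, P p s' * V s')
      = (∑ p : S × A, d p * V p.1)
        - ∑ p : S × A, d p * (γ * ∑ s' : S, P p s' * V s') := by
        rw [← Finset.sum_sub_distrib]
        exact Finset.sum_congr rfl fun p _ => by ring
    _ = (1 - γ) * ∑ s : S, ρ₀ s * V s := by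
        rw [h1, h2]
        have h3 : ∑ s : S, ((1 - γ) * ρ₀ s + γ * ∑ p : S × A, P p s * d p) * V s
            = (∑ s : S, (1 - γ) * (ρ₀ s * V s))
              + γ * ∑ s : S, (∑ p : S × A, P p s * d p) * V s := by
          rw [Finset.mul_sum, ← Finset.sum_add_distrib]
          exact Finset.sum_congr rfl fun s _ => by ring
        rw [h3, add_sub_cancel_right, ← Finset.mul_sum]

end

section
variable {S A : Type*} [Fintype S] [Fintype A] [Nonempty S] [Nonempty A]

/-- The dual objective (log-sum-exp of the soft Bellman residual). -/
noncomputable def dualObj (P : S × A → S → ℝ) (ρ₀ : S → ℝ) (γ : ℝ)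
    (R dO : S × A → ℝ) (V : S → ℝ) : ℝ :=
  (1 - γ) * (∑ s : S, ρ₀ s * V s)
    + Real.log (∑ p : S × A, dO p *
        Real.exp (R p + γ * (∑ s' : S, P p s' * V s') - V p.1))

lemma weak_duality (P : S × A → S → ℝ) (hP1 : ∀ p : S × A, ∑ s' : S, P p s' = 1)
    (ρ₀ : S → ℝ) (hρ1 : ∑ s : S, ρ₀ s = 1) (γ : ℝ) (hγ1 : γ < 1)
    (R dO : S × A → ℝ) (hO0 : ∀ p, 0 < dO p)
    (d : S × A → ℝ) (hd0 : ∀ p, 0 ≤ d p)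
    (hflow : ∀ s : S, ∑ a : A, d (s, a)
        = (1 - γ) * ρ₀ s + γ * ∑ p : S × A, P p s * d p) (V : S → ℝ) :
    (∑ p : S × A, d p * R p) - ∑ p : S × A, d p * Real.log (d p / dO p)
      ≤ dualObj P ρ₀ γ R dO V := by
  set f : S × A → ℝ := fun p => R p + γ * (∑ s' : S, P p s' * V s') - V p.1 with hf
  have hsum1 : ∑ p : S × A, d p = 1 := flow_sum_one P hP1 ρ₀ hρ1 γ hγ1 d hflow
  have hgibbs := gibbs_ineq d dO f hd0 hsum1 hO0
  have hfl := flow_identity P ρ₀ γ d hflow V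
  have hsplit : ∑ p : S × A, d p * R p
      = (∑ p : S × A, d p * f p)
        + ∑ p : S × A, d p * (V p.1 - γ * ∑ s' : S, P p s' * V s') := by
    rw [← Finset.sum_add_distrib]
    exact Finset.sum_congr rfl fun p _ => by simp only [hf]; ring
  rw [hsplit, hfl]
  unfold dualObj
  linarith [hgibbs]
end

lemma hasDerivAt_lse {X : Type*} [Fintype X] [Nonempty X] (c a b : X → ℝ)
    (hc : ∀ x, 0 < c x) :
    HasDerivAt (fun t => Real.log (∑ x, c x * Real.exp (a x + t * b x)))
      ((∑ x, c x * b x * Real.exp (a x)) / (∑ x, c x * Real.exp (a x))) 0 := by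
  have hsum : HasDerivAt (fun t => ∑ x, c x * Real.exp (a x + t * b x))
      (∑ x, c x * b x * Real.exp (a x)) 0 := by
    refine HasDerivAt.fun_sum (fun x _ => ?_)
    have h1 : HasDerivAt (fun t : ℝ => a x + t * b x) (b x) 0 := by
      simpa using ((hasDerivAt_id (0:ℝ)).mul_const (b x)).const_add (a x)
    have h3 := h1.exp.const_mul (c x)
    simpa [mul_comm, mul_assoc, mul_left_comm] using h3
  have hpos : 0 < ∑ x, c x * Real.exp (a x + (0:ℝ) * b x) :=
    Finset.sum_pos (fun x _ => mul_pos (hc x) (Real.exp_pos _)) Finset.univ_nonempty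
  have := hsum.log (ne_of_gt hpos)
  simpa using this

section
variable {S A : Type*} [Fintype S] [Fintype A] [Nonempty S] [Nonempty A]

lemma dualObj_shift (P : S × A → S → ℝ) (hP1 : ∀ p : S × A, ∑ s' : S, P p s' = 1)
    (ρ₀ : S → ℝ) (hρ1 : ∑ s : S, ρ₀ s = 1) (γ : ℝ)
    (R dO : S × A → ℝ) (hO0 : ∀ p, 0 < dO p) (V : S → ℝ) (c : ℝ) :
    dualObj P ρ₀ γ R dO (fun s => V s + c) = dualObj P ρ₀ γ R dO V := by
  unfold dualObj
  have hlin : ∑ s : S, ρ₀ s * (V s + c) = (∑ s : S, ρ₀ s * V s) + c := by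
    have h : ∑ s : S, ρ₀ s * (V s + c) = ∑ s : S, (ρ₀ s * V s + ρ₀ s * c) :=
      Finset.sum_congr rfl fun s _ => by ring
    rw [h, Finset.sum_add_distrib, ← Finset.sum_mul, hρ1, one_mul]
  have hexp : ∀ p : S × A,
      R p + γ * (∑ s' : S, P p s' * (V s' + c)) - (V p.1 + c)
        = (R p + γ * (∑ s' : S, P p s' * V s') - V p.1) + (γ - 1) * c := by
    intro p
    have : ∑ s' : S, P p s' * (V s' + c) = (∑ s' : S, P p s' * V s') + c := by
      have h : ∑ s' : S, P p s' * (V s' + c) = ∑ s' : S, (P p s' * V s' + P p s' * c) :=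
        Finset.sum_congr rfl fun s' _ => by ring
      rw [h, Finset.sum_add_distrib, ← Finset.sum_mul, hP1 p, one_mul]
    rw [this]; ring
  have hZ : ∑ p : S × A, dO p * Real.exp
        (R p + γ * (∑ s' : S, P p s' * (V s' + c)) - (V p.1 + c))
      = (∑ p : S × A, dO p * Real.exp
          (R p + γ * (∑ s' : S, P p s' * V s') - V p.1)) * Real.exp ((γ - 1) * c) := by
    rw [Finset.sum_mul]
    refine Finset.sum_congr rfl fun p _ => ?_
    rw [hexp p, Real.exp_add]; ring
  have hZpos : 0 < ∑ p : S × A, dO p * Real.exp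
      (R p + γ * (∑ s' : S, P p s' * V s') - V p.1) :=
    Finset.sum_pos (fun p _ => mul_pos (hO0 p) (Real.exp_pos _)) Finset.univ_nonempty
  rw [hlin, hZ, Real.log_mul (ne_of_gt hZpos) (ne_of_gt (Real.exp_pos _)), Real.log_exp]
  ring

lemma sublevel_bounded (P : S × A → S → ℝ) (hP0 : ∀ p s', 0 ≤ P p s')
    (hP1 : ∀ p : S × A, ∑ s' : S, P p s' = 1)
    (ρ₀ : S → ℝ) (hρ1 : ∑ s : S, ρ₀ s = 1)
    (γ : ℝ) (hγ0 : 0 < γ) (hγ1 : γ < 1)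
    (R dO : S × A → ℝ) (hO0 : ∀ p, 0 < dO p)
    (d0 : S × A → ℝ) (hd0pos : ∀ p, 0 < d0 p)
    (hd0flow : ∀ s : S, ∑ a : A, d0 (s, a)
        = (1 - γ) * ρ₀ s + γ * ∑ p : S × A, P p s * d0 p)
    (M : ℝ) :
    ∃ K : ℝ, ∀ V : S → ℝ, dualObj P ρ₀ γ R dO V ≤ M →
      (∃ s₀ : S, V s₀ = 0) → ∀ s, |V s| ≤ K := by
  classical
  have hne : (Finset.univ : Finset (S × A)).Nonempty := Finset.univ_nonempty
  set δ : ℝ := Finset.univ.inf' hne d0 with hδ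
  have hδpos : 0 < δ := by
    rw [hδ, Finset.lt_inf'_iff]
    exact fun p _ => hd0pos p
  have hδle : ∀ p : S × A, δ ≤ d0 p := fun p => Finset.inf'_le _ (Finset.mem_univ p)
  have hd0sum : ∑ p : S × A, d0 p = 1 := flow_sum_one P hP1 ρ₀ hρ1 γ hγ1 d0 hd0flow
  have hδ1 : δ ≤ 1 := by
    obtain ⟨p⟩ := (inferInstance : Nonempty (S × A))
    calc δ ≤ d0 p := hδle p
      _ ≤ ∑ q : S × A, d0 q :=
        Finset.single_le_sum (fun q _ => (hd0pos q).le) (Finset.mem_univ p)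
      _ = 1 := hd0sum
  set C₀ : ℝ := M + Finset.univ.sup' hne (fun p : S × A => -(Real.log (dO p)) - R p) with hC₀
  set L : ℝ := C₀ / δ with hL
  refine ⟨2 * L / (1 - γ), ?_⟩
  intro V hV ⟨s₀, hs₀⟩
  set c : ℝ := (1 - γ) * ∑ s : S, ρ₀ s * V s with hc
  set f : S × A → ℝ := fun p => R p + γ * (∑ s' : S, P p s' * V s') - V p.1 with hf
  set Z : ℝ := ∑ p : S × A, dO p * Real.exp (f p) with hZdef
  have hZpos : 0 < Z :=
    Finset.sum_pos (fun p _ => mul_pos (hO0 p) (Real.exp_pos _)) hne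
  have hlogZ : Real.log Z ≤ M - c := by
    have : c + Real.log Z ≤ M := hV
    linarith
  -- pointwise upper bound on f
  have hfub : ∀ p : S × A, f p ≤ M - c - Real.log (dO p) := by
    intro p
    have h1 : dO p * Real.exp (f p) ≤ Z := by
      rw [hZdef]
      exact Finset.single_le_sum
        (fun q _ => (mul_pos (hO0 q) (Real.exp_pos _)).le) (Finset.mem_univ p)
    have h2 : Real.log (dO p * Real.exp (f p)) ≤ Real.log Z :=
      Real.log_le_log (mul_pos (hO0 p) (Real.exp_pos _)) h1
    rw [Real.log_mul (ne_of_gt (hO0 p)) (ne_of_gt (Real.exp_pos _)), Real.log_exp] at h2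
    linarith
  set y : S × A → ℝ := fun p => γ * (∑ s' : S, P p s' * V s') - V p.1 + c with hy
  have hyub : ∀ p : S × A, y p ≤ C₀ := by
    intro p
    have h1 : -(Real.log (dO p)) - R p
        ≤ Finset.univ.sup' hne (fun p : S × A => -(Real.log (dO p)) - R p) :=
      Finset.le_sup' (fun p : S × A => -(Real.log (dO p)) - R p) (Finset.mem_univ p)
    have h2 := hfub p
    simp only [hy, hf] at h2 ⊢
    rw [hC₀]
    linarith
  have hysum : ∑ p : S × A, d0 p * y p = 0 := by
    have h1 := flow_identity P ρ₀ γ d0 hd0flow V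
    have h2 : ∑ p : S × A, d0 p * y p
        = -(∑ p : S × A, d0 p * (V p.1 - γ * ∑ s' : S, P p s' * V s'))
          + c * ∑ p : S × A, d0 p := by
      rw [← Finset.sum_neg_distrib, Finset.mul_sum, ← Finset.sum_add_distrib]
      exact Finset.sum_congr rfl fun p _ => by simp only [hy]; ring
    rw [h2, h1, hd0sum, hc]; ring
  have hC₀0 : 0 ≤ C₀ := by
    by_contra h
    push_neg at h
    have : ∑ p : S × A, d0 p * y p < 0 := by
      have : ∀ p ∈ Finset.univ, d0 p * y p < 0 :=
        fun p _ => mul_neg_of_pos_of_neg (hd0pos p) (lt_of_le_of_lt (hyub p) h)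
      calc ∑ p : S × A, d0 p * y p < ∑ p : S × A, (0:ℝ) :=
            Finset.sum_lt_sum_of_nonempty hne this
        _ = 0 := by simp
    linarith [hysum]
  have hL0 : 0 ≤ L := div_nonneg hC₀0 hδpos.le
  have hylb : ∀ p : S × A, -L ≤ y p := by
    intro p
    have hsplit : d0 p * y p + ∑ q ∈ Finset.univ.erase p, d0 q * y q
        = ∑ q : S × A, d0 q * y q :=
          Finset.add_sum_erase _ (fun q => d0 q * y q) (Finset.mem_univ p)
    have herase : ∑ q ∈ Finset.univ.erase p, d0 q * y q ≤ C₀ := by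
      calc ∑ q ∈ Finset.univ.erase p, d0 q * y q
          ≤ ∑ q ∈ Finset.univ.erase p, d0 q * C₀ :=
            Finset.sum_le_sum fun q _ => mul_le_mul_of_nonneg_left (hyub q) (hd0pos q).le
        _ = (∑ q ∈ Finset.univ.erase p, d0 q) * C₀ := by rw [Finset.sum_mul]
        _ ≤ 1 * C₀ := by
            refine mul_le_mul_of_nonneg_right ?_ hC₀0
            calc ∑ q ∈ Finset.univ.erase p, d0 q
                ≤ ∑ q : S × A, d0 q :=
                  Finset.sum_le_sum_of_subset_of_nonneg (Finset.erase_subset _ _)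
                    (fun q _ _ => (hd0pos q).le)
              _ = 1 := hd0sum
        _ = C₀ := one_mul _
    have h3 : -C₀ ≤ d0 p * y p := by
      rw [hysum] at hsplit
      linarith
    have h4 : -C₀ / d0 p ≤ y p := by
      rw [div_le_iff₀ (hd0pos p)]
      nlinarith [h3]
    have h5 : C₀ / d0 p ≤ C₀ / δ :=
      div_le_div_of_nonneg_left hC₀0 hδpos (hδle p)
    have e1 : -C₀ / d0 p = -(C₀ / d0 p) := neg_div _ _
    rw [hL]
    linarith [h4, h5, e1.le, e1.ge]
  have hyub' : ∀ p : S × A, y p ≤ L := by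
    intro p
    calc y p ≤ C₀ := hyub p
      _ = C₀ / 1 := (div_one _).symm
      _ ≤ C₀ / δ := div_le_div_of_nonneg_left hC₀0 hδpos hδ1
  -- extremal states
  obtain ⟨smax, -, hsmax⟩ := Finset.exists_max_image Finset.univ V Finset.univ_nonempty
  obtain ⟨smin, -, hsmin⟩ := Finset.exists_min_image Finset.univ V Finset.univ_nonempty
  have hsmax' : ∀ s, V s ≤ V smax := fun s => hsmax s (Finset.mem_univ s)
  have hsmin' : ∀ s, V smin ≤ V s := fun s => hsmin s (Finset.mem_univ s)
  obtain ⟨a₀⟩ := (inferInstance : Nonempty A)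
  have hPVub : ∀ p : S × A, ∑ s' : S, P p s' * V s' ≤ V smax := by
    intro p
    calc ∑ s' : S, P p s' * V s' ≤ ∑ s' : S, P p s' * V smax :=
          Finset.sum_le_sum fun s' _ => mul_le_mul_of_nonneg_left (hsmax' s') (hP0 p s')
      _ = V smax := by rw [← Finset.sum_mul, hP1 p, one_mul]
  have hPVlb : ∀ p : S × A, V smin ≤ ∑ s' : S, P p s' * V s' := by
    intro p
    calc V smin = ∑ s' : S, P p s' * V smin := by rw [← Finset.sum_mul, hP1 p, one_mul]
      _ ≤ ∑ s' : S, P p s' * V s' :=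
          Finset.sum_le_sum fun s' _ => mul_le_mul_of_nonneg_left (hsmin' s') (hP0 p s')
  have hmaxb : (1 - γ) * V smax ≤ c + L := by
    have h1 := hylb (smax, a₀)
    have h2 := hPVub (smax, a₀)
    simp only [hy] at h1
    have hγ0' : (0:ℝ) ≤ γ := hγ0.le
    nlinarith [h1, h2]
  have hminb : c - L ≤ (1 - γ) * V smin := by
    have h1 := hyub' (smin, a₀)
    have h2 := hPVlb (smin, a₀)
    simp only [hy] at h1
    nlinarith [h1, h2]
  have hVmax0 : 0 ≤ V smax := hs₀ ▸ hsmax' s₀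
  have hVmin0 : V smin ≤ 0 := hs₀ ▸ hsmin' s₀
  have hγpos : (0:ℝ) < 1 - γ := by linarith
  have hcub : c ≤ L := by nlinarith [hminb, hVmin0]
  have hclb : -L ≤ c := by nlinarith [hmaxb, hVmax0]
  intro s
  rw [abs_le]
  have hlow : c - L ≤ (1 - γ) * V s := le_trans hminb (by nlinarith [hsmin' s])
  have hhigh : (1 - γ) * V s ≤ c + L := le_trans (by nlinarith [hsmax' s]) hmaxb
  constructor
  · have h6 : -(2 * L) / (1 - γ) ≤ V s := by
      rw [div_le_iff₀ hγpos]
      nlinarith [hlow, hclb]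
    have e1 : -(2 * L) / (1 - γ) = -(2 * L / (1 - γ)) := neg_div _ _
    linarith [h6, e1.le, e1.ge]
  · rw [le_div_iff₀ hγpos]
    nlinarith [hhigh, hcub]


lemma dualObj_continuous (P : S × A → S → ℝ) (ρ₀ : S → ℝ) (γ : ℝ)
    (R dO : S × A → ℝ) (hO0 : ∀ p, 0 < dO p) :
    Continuous (dualObj P ρ₀ γ R dO) := by
  have h1 : Continuous fun V : S → ℝ => ∑ s : S, ρ₀ s * V s :=
    continuous_finset_sum _ fun s _ => continuous_const.mul (continuous_apply s)
  have hZ : Continuous fun V : S → ℝ => ∑ p : S × A, dO p *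
      Real.exp (R p + γ * (∑ s' : S, P p s' * V s') - V p.1) := by
    refine continuous_finset_sum _ fun p _ => continuous_const.mul ?_
    refine Real.continuous_exp.comp ?_
    refine Continuous.sub (Continuous.add continuous_const ?_) (continuous_apply p.1)
    exact continuous_const.mul
      (continuous_finset_sum _ fun s' _ => continuous_const.mul (continuous_apply s'))
  have hZpos : ∀ V : S → ℝ, 0 < ∑ p : S × A, dO p *
      Real.exp (R p + γ * (∑ s' : S, P p s' * V s') - V p.1) := fun V =>
    Finset.sum_pos (fun p _ => mul_pos (hO0 p) (Real.exp_pos _)) Finset.univ_nonempty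
  have hlog : Continuous fun V : S → ℝ => Real.log (∑ p : S × A, dO p *
      Real.exp (R p + γ * (∑ s' : S, P p s' * V s') - V p.1)) := by
    rw [continuous_iff_continuousAt]
    intro V
    exact ContinuousAt.log hZ.continuousAt (ne_of_gt (hZpos V))
  exact (continuous_const.mul h1).add hlog

lemma exists_global_min (P : S × A → S → ℝ) (hP0 : ∀ p s', 0 ≤ P p s')
    (hP1 : ∀ p : S × A, ∑ s' : S, P p s' = 1)
    (ρ₀ : S → ℝ) (hρ1 : ∑ s : S, ρ₀ s = 1)
    (γ : ℝ) (hγ0 : 0 < γ) (hγ1 : γ < 1)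
    (R dO : S × A → ℝ) (hO0 : ∀ p, 0 < dO p)
    (d0 : S × A → ℝ) (hd0pos : ∀ p, 0 < d0 p)
    (hd0flow : ∀ s : S, ∑ a : A, d0 (s, a)
        = (1 - γ) * ρ₀ s + γ * ∑ p : S × A, P p s * d0 p) :
    ∃ V : S → ℝ, ∀ W : S → ℝ,
      dualObj P ρ₀ γ R dO V ≤ dualObj P ρ₀ γ R dO W := by
  classical
  obtain ⟨K, hK⟩ := sublevel_bounded P hP0 hP1 ρ₀ hρ1 γ hγ0 hγ1 R dO hO0 d0 hd0pos
    hd0flow (dualObj P ρ₀ γ R dO 0)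
  have s₀ : S := Classical.arbitrary S
  have hK0 : 0 ≤ K := by
    have := hK 0 le_rfl ⟨s₀, rfl⟩ s₀
    simpa using this
  set C : Set (S → ℝ) := Set.Icc (fun _ => -K) (fun _ => K) with hC
  have hCcompact : IsCompact C := isCompact_Icc
  have hC0 : (0 : S → ℝ) ∈ C := by
    constructor <;> intro s <;> simp [neg_nonpos_of_nonneg hK0, hK0]
  obtain ⟨Vm, hVmem, hmin⟩ := hCcompact.exists_isMinOn ⟨0, hC0⟩
    (dualObj_continuous P ρ₀ γ R dO hO0).continuousOn
  refine ⟨Vm, fun W => ?_⟩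
  by_contra hcon
  push_neg at hcon
  set W' : S → ℝ := fun s => W s + -(W s₀) with hW'
  have hshift : dualObj P ρ₀ γ R dO W' = dualObj P ρ₀ γ R dO W := by
    rw [hW']
    exact dualObj_shift P hP1 ρ₀ hρ1 γ R dO hO0 W (-(W s₀))
  have hle0 : dualObj P ρ₀ γ R dO W' ≤ dualObj P ρ₀ γ R dO 0 := by
    rw [hshift]
    exact le_trans hcon.le (hmin hC0)
  have hW'mem : W' ∈ C := by
    have hb := hK W' hle0 ⟨s₀, by simp [hW']⟩
    constructor <;> intro s <;> [skip; skip] <;>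
      · have := abs_le.mp (hb s)
        simp only [hW']
        first
          | exact this.1
          | exact this.2
  have h7 : dualObj P ρ₀ γ R dO Vm ≤ dualObj P ρ₀ γ R dO W' := hmin hW'mem
  rw [hshift] at h7
  exact absurd (lt_of_le_of_lt h7 hcon) (lt_irrefl _)

lemma min_flow (P : S × A → S → ℝ) (hP1 : ∀ p : S × A, ∑ s' : S, P p s' = 1)
    (ρ₀ : S → ℝ) (γ : ℝ) (R dO : S × A → ℝ) (hO0 : ∀ p, 0 < dO p)
    (Vm : S → ℝ)
    (hmin : ∀ W : S → ℝ, dualObj P ρ₀ γ R dO Vm ≤ dualObj P ρ₀ γ R dO W) (s : S) :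
    ∑ a : A, (dO (s, a) * Real.exp (R (s, a) + γ * (∑ s' : S, P (s, a) s' * Vm s') - Vm s)
        / (∑ q : S × A, dO q * Real.exp (R q + γ * (∑ s' : S, P q s' * Vm s') - Vm q.1)))
      = (1 - γ) * ρ₀ s + γ * ∑ p : S × A, P p s *
          (dO p * Real.exp (R p + γ * (∑ s' : S, P p s' * Vm s') - Vm p.1)
            / (∑ q : S × A, dO q * Real.exp (R q + γ * (∑ s' : S, P q s' * Vm s') - Vm q.1))) := by
  classical
  set f : S × A → ℝ := fun p => R p + γ * (∑ s' : S, P p s' * Vm s') - Vm p.1 with hf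
  set Z : ℝ := ∑ q : S × A, dO q * Real.exp (f q) with hZdef
  have hZpos : 0 < Z :=
    Finset.sum_pos (fun q _ => mul_pos (hO0 q) (Real.exp_pos _)) Finset.univ_nonempty
  set dstar : S × A → ℝ := fun p => dO p * Real.exp (f p) / Z with hds
  set b : S × A → ℝ := fun p => γ * P p s - (if p.1 = s then (1:ℝ) else 0) with hb
  -- the perturbed objective as a function of t
  set ψ : ℝ → ℝ := fun t =>
    dualObj P ρ₀ γ R dO (fun s'' => Vm s'' + t * (if s'' = s then (1:ℝ) else 0)) with hψ
  have hψeq : ψ = fun t =>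
      ((1 - γ) * (∑ s'' : S, ρ₀ s'' * Vm s'') + t * ((1 - γ) * ρ₀ s))
        + Real.log (∑ p : S × A, dO p * Real.exp (f p + t * b p)) := by
    funext t
    show (1 - γ) * (∑ s'' : S, ρ₀ s'' * (Vm s'' + t * (if s'' = s then (1:ℝ) else 0)))
        + Real.log (∑ p : S × A, dO p * Real.exp
            (R p + γ * (∑ s' : S, P p s' * (Vm s' + t * (if s' = s then (1:ℝ) else 0)))
              - (Vm p.1 + t * (if p.1 = s then (1:ℝ) else 0)))) = _
    have hlin : ∑ s'' : S, ρ₀ s'' * (Vm s'' + t * (if s'' = s then (1:ℝ) else 0))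
        = (∑ s'' : S, ρ₀ s'' * Vm s'') + t * ρ₀ s := by
      have h : ∀ s'' : S, ρ₀ s'' * (Vm s'' + t * (if s'' = s then (1:ℝ) else 0))
          = ρ₀ s'' * Vm s'' + (if s'' = s then t * ρ₀ s'' else 0) := by
        intro s''
        by_cases hcase : s'' = s <;> simp [hcase] <;> ring
      rw [Finset.sum_congr rfl (fun s'' _ => h s''), Finset.sum_add_distrib,
        Finset.sum_ite_eq' Finset.univ s (fun s'' => t * ρ₀ s'')]
      simp
    have hexp : ∀ p : S × A,
        R p + γ * (∑ s' : S, P p s' * (Vm s' + t * (if s' = s then (1:ℝ) else 0)))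
          - (Vm p.1 + t * (if p.1 = s then (1:ℝ) else 0))
        = f p + t * b p := by
      intro p
      have hin : ∑ s' : S, P p s' * (Vm s' + t * (if s' = s then (1:ℝ) else 0))
          = (∑ s' : S, P p s' * Vm s') + t * P p s := by
        have h : ∀ s' : S, P p s' * (Vm s' + t * (if s' = s then (1:ℝ) else 0))
            = P p s' * Vm s' + (if s' = s then t * P p s' else 0) := by
          intro s'
          by_cases hcase : s' = s <;> simp [hcase] <;> ring
        rw [Finset.sum_congr rfl (fun s' _ => h s'), Finset.sum_add_distrib,
          Finset.sum_ite_eq' Finset.univ s (fun s' => t * P p s')]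
        simp
      rw [hin, hf, hb]
      ring
    rw [hlin]
    have : ∀ p : S × A, dO p * Real.exp
        (R p + γ * (∑ s' : S, P p s' * (Vm s' + t * (if s' = s then (1:ℝ) else 0)))
          - (Vm p.1 + t * (if p.1 = s then (1:ℝ) else 0)))
        = dO p * Real.exp (f p + t * b p) := fun p => by rw [hexp p]
    rw [Finset.sum_congr rfl (fun p _ => this p)]
    ring
  have hloc : IsLocalMin ψ 0 := by
    apply Filter.Eventually.of_forall
    intro t
    have hψ0 : ψ 0 = dualObj P ρ₀ γ R dO Vm := by
      show dualObj P ρ₀ γ R dO (fun s'' => Vm s'' + 0 * (if s'' = s then (1:ℝ) else 0))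
          = dualObj P ρ₀ γ R dO Vm
      exact congrArg _ (funext fun s'' => by ring)
    rw [hψ0]
    exact hmin _
  have hderiv : HasDerivAt ψ
      ((1 - γ) * ρ₀ s + (∑ p : S × A, dO p * b p * Real.exp (f p)) / Z) 0 := by
    rw [hψeq]
    have h1 : HasDerivAt (fun t : ℝ =>
        (1 - γ) * (∑ s'' : S, ρ₀ s'' * Vm s'') + t * ((1 - γ) * ρ₀ s))
        ((1 - γ) * ρ₀ s) 0 := by
      simpa using ((hasDerivAt_id (0:ℝ)).mul_const ((1 - γ) * ρ₀ s)).const_add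
        ((1 - γ) * (∑ s'' : S, ρ₀ s'' * Vm s''))
    exact h1.add (hasDerivAt_lse dO f b hO0)
  have hD : (1 - γ) * ρ₀ s + (∑ p : S × A, dO p * b p * Real.exp (f p)) / Z = 0 :=
    hloc.hasDerivAt_eq_zero hderiv
  -- interpret the stationarity condition
  have e1 : (∑ p : S × A, dO p * b p * Real.exp (f p)) / Z
      = γ * (∑ p : S × A, P p s * dstar p) - ∑ a : A, dstar (s, a) := by
    rw [Finset.sum_div]
    have h : ∀ p : S × A, dO p * b p * Real.exp (f p) / Z
        = γ * (P p s * dstar p) - (if p.1 = s then dstar p else 0) := by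
      intro p
      rw [hb, hds]
      by_cases hcase : p.1 = s <;> simp only [hcase, if_true, if_false] <;> ring
    rw [Finset.sum_congr rfl (fun p _ => h p), Finset.sum_sub_distrib, ← Finset.mul_sum]
    congr 1
    rw [Fintype.sum_prod_type]
    have h2 : ∀ s'' : S, ∑ a : A, (if ((s'', a) : S × A).1 = s then dstar (s'', a) else 0)
        = if s'' = s then ∑ a : A, dstar (s'', a) else 0 := by
      intro s''
      by_cases hcase : s'' = s <;> simp [hcase]
    rw [Finset.sum_congr rfl (fun s'' _ => h2 s''),
      Finset.sum_ite_eq' Finset.univ s (fun s'' => ∑ a : A, dstar (s'', a))]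
    simp
  rw [e1] at hD
  have goal' : ∑ a : A, dstar (s, a)
      = (1 - γ) * ρ₀ s + γ * ∑ p : S × A, P p s * dstar p := by linarith
  exact goal'
end

/-- Strong duality for KL-regularized occupancy optimization: under strict feasibility
of the Bellman flow constraints, the supremum of the KL-regularized expected reward
over flow-feasible occupancies equals the infimum of the log-sum-exp dual objective
over value functions. -/
theorem kl_regularized_occupancy_strong_duality
    {S A : Type*} [Fintype S] [Fintype A] [Nonempty S] [Nonempty A]
    (P : S × A → S → ℝ) (hP0 : ∀ p s', 0 ≤ P p s') (hP1 : ∀ p : S × A, ∑ s' : S, P p s' = 1)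
    (ρ₀ : S → ℝ) (hρ0 : ∀ s, 0 ≤ ρ₀ s) (hρ1 : ∑ s : S, ρ₀ s = 1)
    (γ : ℝ) (hγ0 : 0 < γ) (hγ1 : γ < 1)
    (R : S × A → ℝ)
    (dO : S × A → ℝ) (hO0 : ∀ p, 0 < dO p) (hO1 : ∑ p : S × A, dO p = 1)
    (hfeas : ∃ d : S × A → ℝ, (∀ p, 0 < d p) ∧
      (∀ s : S, ∑ a : A, d (s, a)
          = (1 - γ) * ρ₀ s + γ * ∑ p : S × A, P p s * d p)) :
    sSup {v : ℝ | ∃ d : S × A → ℝ, (∀ p, 0 ≤ d p) ∧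
        (∀ s : S, ∑ a : A, d (s, a)
            = (1 - γ) * ρ₀ s + γ * ∑ p : S × A, P p s * d p) ∧
        v = (∑ p : S × A, d p * R p) - ∑ p : S × A, d p * Real.log (d p / dO p)}
      = sInf {v : ℝ | ∃ V : S → ℝ,
        v = (1 - γ) * (∑ s : S, ρ₀ s * V s)
            + Real.log (∑ p : S × A, dO p *
                Real.exp (R p + γ * (∑ s' : S, P p s' * V s') - V p.1))} := by
  classical
  obtain ⟨d0, hd0pos, hd0flow⟩ := hfeas
  obtain ⟨Vm, hmin⟩ := exists_global_min P hP0 hP1 ρ₀ hρ1 γ hγ0 hγ1 R dO hO0 d0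
    hd0pos hd0flow
  set Sp : Set ℝ := {v : ℝ | ∃ d : S × A → ℝ, (∀ p, 0 ≤ d p) ∧
      (∀ s : S, ∑ a : A, d (s, a)
          = (1 - γ) * ρ₀ s + γ * ∑ p : S × A, P p s * d p) ∧
      v = (∑ p : S × A, d p * R p) - ∑ p : S × A, d p * Real.log (d p / dO p)} with hSp
  set Dl : Set ℝ := {v : ℝ | ∃ V : S → ℝ,
      v = (1 - γ) * (∑ s : S, ρ₀ s * V s)
          + Real.log (∑ p : S × A, dO p *
              Real.exp (R p + γ * (∑ s' : S, P p s' * V s') - V p.1))} with hDl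
  have hDlmem : ∀ V : S → ℝ, dualObj P ρ₀ γ R dO V ∈ Dl := fun V => ⟨V, rfl⟩
  -- weak duality
  have hub : ∀ v ∈ Sp, ∀ w ∈ Dl, v ≤ w := by
    rintro v ⟨d, hd0, hdflow, rfl⟩ w ⟨V, rfl⟩
    exact weak_duality P hP1 ρ₀ hρ1 γ hγ1 R dO hO0 d hd0 hdflow V
  have hSpne : Sp.Nonempty :=
    ⟨_, ⟨d0, fun p => (hd0pos p).le, hd0flow, rfl⟩⟩
  have hDlne : Dl.Nonempty := ⟨_, hDlmem 0⟩
  have hbddA : BddAbove Sp :=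
    ⟨dualObj P ρ₀ γ R dO 0, fun v hv => hub v hv _ (hDlmem 0)⟩
  obtain ⟨v0, hv0⟩ := hSpne
  have hbddB : BddBelow Dl := ⟨v0, fun w hw => hub v0 hv0 w hw⟩
  -- the optimal occupancy
  set f : S × A → ℝ := fun p => R p + γ * (∑ s' : S, P p s' * Vm s') - Vm p.1 with hf
  set Z : ℝ := ∑ q : S × A, dO q * Real.exp (f q) with hZdef
  have hZpos : 0 < Z :=
    Finset.sum_pos (fun q _ => mul_pos (hO0 q) (Real.exp_pos _)) Finset.univ_nonempty
  set dstar : S × A → ℝ := fun p => dO p * Real.exp (f p) / Z with hds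
  have hdsnn : ∀ p, 0 ≤ dstar p := fun p =>
    div_nonneg (mul_nonneg (hO0 p).le (Real.exp_pos _).le) hZpos.le
  have hflowstar : ∀ s : S, ∑ a : A, dstar (s, a)
      = (1 - γ) * ρ₀ s + γ * ∑ p : S × A, P p s * dstar p := fun s =>
    min_flow P hP1 ρ₀ γ R dO hO0 Vm hmin s
  have hsum1 : ∑ p : S × A, dstar p = 1 :=
    flow_sum_one P hP1 ρ₀ hρ1 γ hγ1 dstar hflowstar
  -- the primal value of dstar equals the dual value of Vm
  have hval : (∑ p : S × A, dstar p * R p)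
      - ∑ p : S × A, dstar p * Real.log (dstar p / dO p)
      = dualObj P ρ₀ γ R dO Vm := by
    have hlogd : ∀ p : S × A, Real.log (dstar p / dO p) = f p - Real.log Z := by
      intro p
      have h : dstar p / dO p = Real.exp (f p) / Z := by
        show dO p * Real.exp (f p) / Z / dO p = Real.exp (f p) / Z
        rw [mul_div_assoc, mul_div_cancel_left₀ _ (ne_of_gt (hO0 p))]
      rw [h, Real.log_div (ne_of_gt (Real.exp_pos _)) (ne_of_gt hZpos), Real.log_exp]
    have h1 : ∑ p : S × A, dstar p * Real.log (dstar p / dO p)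
        = (∑ p : S × A, dstar p * f p) - Real.log Z := by
      have h2 : ∀ p : S × A, dstar p * Real.log (dstar p / dO p)
          = dstar p * f p - Real.log Z * dstar p := fun p => by rw [hlogd p]; ring
      rw [Finset.sum_congr rfl (fun p _ => h2 p), Finset.sum_sub_distrib,
        ← Finset.mul_sum, hsum1, mul_one]
    have h3 : (∑ p : S × A, dstar p * R p) - ∑ p : S × A, dstar p * f p
        = ∑ p : S × A, dstar p * (Vm p.1 - γ * ∑ s' : S, P p s' * Vm s') := by
      rw [← Finset.sum_sub_distrib]
      refine Finset.sum_congr rfl fun p _ => ?_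
      simp only [hf]
      ring
    have h4 := flow_identity P ρ₀ γ dstar hflowstar Vm
    have h5 : dualObj P ρ₀ γ R dO Vm
        = (1 - γ) * (∑ s : S, ρ₀ s * Vm s) + Real.log Z := rfl
    rw [h1, h5]
    linarith [h3, h4]
  have hstarmem : dualObj P ρ₀ γ R dO Vm ∈ Sp := by
    rw [← hval]
    exact ⟨dstar, hdsnn, hflowstar, rfl⟩
  refine le_antisymm ?_ ?_
  · exact csSup_le ⟨v0, hv0⟩ fun v hv => le_csInf hDlne fun w hw => hub v hv w hw
  · calc sInf Dl ≤ dualObj P ρ₀ γ R dO Vm := csInf_le hbddB (hDlmem Vm)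
      _ ≤ sSup Sp := le_csSup hbddA hstarmem
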